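/- Let ρ be a PPT state on ℂ²⊗ℂ²⊗ℂ² with rank(ρ) = 2. Then there exist nonzero vectors e, f, g ∈ ℂ² such that ρ (e⊗f⊗g) = 0, i.e., the product vector e⊗f⊗g lies in the kernel of ρ. -/

import Mathlib

open Matrix BigOperators ComplexOrder

noncomputable section

/-- Partial transpose with respect to Alice (the first `Fin 2` factor). -/
def ptA {N : ℕ} (ρ : Matrix (Fin 2 × Fin 2 × Fin N) (Fin 2 × Fin 2 × Fin N) ℂ) :
    Matrix (Fin 2 × Fin 2 × Fin N) (Fin 2 × Fin 2 × Fin N) ℂ :=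
  fun x y => ρ (y.1, x.2.1, x.2.2) (x.1, y.2.1, y.2.2)

/-- Partial transpose with respect to Bob (the second `Fin 2` factor). -/
def ptB {N : ℕ} (ρ : Matrix (Fin 2 × Fin 2 × Fin N) (Fin 2 × Fin 2 × Fin N) ℂ) :
    Matrix (Fin 2 × Fin 2 × Fin N) (Fin 2 × Fin 2 × Fin N) ℂ :=
  fun x y => ρ (x.1, y.2.1, x.2.2) (y.1, x.2.1, y.2.2)

/-- Partial transpose with respect to Alice and Bob. -/
def ptAB {N : ℕ} (ρ : Matrix (Fin 2 × Fin 2 × Fin N) (Fin 2 × Fin 2 × Fin N) ℂ) :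
    Matrix (Fin 2 × Fin 2 × Fin N) (Fin 2 × Fin 2 × Fin N) ℂ :=
  ptB (ptA ρ)

/-- PPT: all partial transposes are positive semidefinite. -/
def IsPPT {N : ℕ} (ρ : Matrix (Fin 2 × Fin 2 × Fin N) (Fin 2 × Fin 2 × Fin N) ℂ) : Prop :=
  (ptA ρ).PosSemidef ∧ (ptB ρ).PosSemidef ∧ (ptAB ρ).PosSemidef

/-- The product vector `e ⊗ f ⊗ g`. -/
def prodVec {N : ℕ} (e f : Fin 2 → ℂ) (g : Fin N → ℂ) : Fin 2 × Fin 2 × Fin N → ℂ :=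
  fun x => e x.1 * f x.2.1 * g x.2.2

/-- The rank-one outer product `v v†`. -/
def outer {n : Type*} (v : n → ℂ) : Matrix n n ℂ := Matrix.vecMulVec v (star v)

/-- Full separability of a tripartite state. -/
def SeparableState {N : ℕ} (ρ : Matrix (Fin 2 × Fin 2 × Fin N) (Fin 2 × Fin 2 × Fin N) ℂ) : Prop :=
  ∃ (k : ℕ) (p : Fin k → ℝ) (e f : Fin k → Fin 2 → ℂ) (g : Fin k → Fin N → ℂ),
    (∀ i, 0 ≤ p i) ∧
    ρ = ∑ i, (p i : ℂ) • outer (prodVec (e i) (f i) (g i))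

/-- Reduced matrix of Alice. -/
def redA {N : ℕ} (ρ : Matrix (Fin 2 × Fin 2 × Fin N) (Fin 2 × Fin 2 × Fin N) ℂ) :
    Matrix (Fin 2) (Fin 2) ℂ :=
  fun a a' => ∑ b : Fin 2, ∑ c : Fin N, ρ (a, b, c) (a', b, c)

/-- Reduced matrix of Bob. -/
def redB {N : ℕ} (ρ : Matrix (Fin 2 × Fin 2 × Fin N) (Fin 2 × Fin 2 × Fin N) ℂ) :
    Matrix (Fin 2) (Fin 2) ℂ :=
  fun b b' => ∑ a : Fin 2, ∑ c : Fin N, ρ (a, b, c) (a, b', c)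

/-- Reduced matrix of Charlie. -/
def redC {N : ℕ} (ρ : Matrix (Fin 2 × Fin 2 × Fin N) (Fin 2 × Fin 2 × Fin N) ℂ) :
    Matrix (Fin N) (Fin N) ℂ :=
  fun c c' => ∑ a : Fin 2, ∑ b : Fin 2, ρ (a, b, c) (a, b, c')

/-- `ρ` is supported on `ℂ² ⊗ ℂ² ⊗ ℂᴺ`: all single-party reduced matrices have full rank. -/
def SupportedOn {N : ℕ} (ρ : Matrix (Fin 2 × Fin 2 × Fin N) (Fin 2 × Fin 2 × Fin N) ℂ) : Prop :=
  (redA ρ).rank = 2 ∧ (redB ρ).rank = 2 ∧ (redC ρ).rank = N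

lemma quadRoot (α β γ : ℂ) : ∃ x y : ℂ, ¬(x = 0 ∧ y = 0) ∧ α*x^2 + β*(x*y) + γ*y^2 = 0 := by
  by_cases hα : α = 0
  · exact ⟨1, 0, by simp, by simp [hα]⟩
  · obtain ⟨s, hs⟩ := IsAlgClosed.exists_pow_nat_eq (β^2 - 4*α*γ) (n := 2) (by norm_num)
    refine ⟨(-β + s)/(2*α), 1, by simp, ?_⟩
    have h2 : (2*α) ≠ 0 := by simp [hα]
    have key : α*((-β + s)/(2*α))^2 + β*(((-β + s)/(2*α))*1) + γ*1^2
        = (s^2 - (β^2 - 4*α*γ)) / (4*α) := by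
      field_simp
      ring
    rw [key, hs]
    simp

lemma twoForms (A B : Matrix (Fin 2) (Fin 2) ℂ) :
    ∃ e f : Fin 2 → ℂ, e ≠ 0 ∧ f ≠ 0 ∧ e ⬝ᵥ A.mulVec f = 0 ∧ e ⬝ᵥ B.mulVec f = 0 := by
  obtain ⟨x, y, hxy, hq⟩ := quadRoot (A 0 0 * B 0 1 - A 0 1 * B 0 0)
    (A 0 0 * B 1 1 + A 1 0 * B 0 1 - A 0 1 * B 1 0 - A 1 1 * B 0 0)
    (A 1 0 * B 1 1 - A 1 1 * B 1 0)
  set e : Fin 2 → ℂ := ![x, y] with he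
  set M : Matrix (Fin 2) (Fin 2) ℂ :=
    Matrix.of ![![x*A 0 0 + y*A 1 0, x*A 0 1 + y*A 1 1],
                ![x*B 0 0 + y*B 1 0, x*B 0 1 + y*B 1 1]] with hM
  have hdet : M.det = 0 := by
    rw [Matrix.det_fin_two]
    simp only [hM, Matrix.of_apply, Matrix.cons_val', Matrix.cons_val_zero,
      Matrix.cons_val_one, Matrix.head_cons, Matrix.empty_val', Matrix.cons_val_fin_one, Matrix.vecHead, Matrix.vecTail]
    linear_combination hq
  obtain ⟨f, hf, hMf⟩ := (Matrix.exists_mulVec_eq_zero_iff).2 hdet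
  have he0 : e ≠ 0 := by
    intro h
    apply hxy
    constructor
    · have := congrFun h 0; simpa [he] using this
    · have := congrFun h 1; simpa [he] using this
  have h0 : M.mulVec f 0 = 0 := by rw [hMf]; rfl
  have h1 : M.mulVec f 1 = 0 := by rw [hMf]; rfl
  simp only [hM, Matrix.mulVec, dotProduct, Fin.sum_univ_two, Matrix.of_apply,
    Matrix.cons_val', Matrix.cons_val_zero, Matrix.cons_val_one, Matrix.head_cons,
    Matrix.empty_val', Matrix.cons_val_fin_one, Matrix.vecHead, Matrix.vecTail] at h0 h1
  refine ⟨e, f, he0, hf, ?_, ?_⟩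
  · simp only [he, dotProduct, Matrix.mulVec, Fin.sum_univ_two,
      Matrix.cons_val_zero, Matrix.cons_val_one, Matrix.head_cons]
    linear_combination h0
  · simp only [he, dotProduct, Matrix.mulVec, Fin.sum_univ_two,
      Matrix.cons_val_zero, Matrix.cons_val_one, Matrix.head_cons]
    linear_combination h1


/-- Any three-qubit PPT state of rank 2 has a product vector in its kernel. -/
theorem ppt_rank_two_product_kernel
    (ρ : Matrix (Fin 2 × Fin 2 × Fin 2) (Fin 2 × Fin 2 × Fin 2) ℂ)
    (hpos : ρ.PosSemidef) (hppt : IsPPT ρ) (hrank : ρ.rank = 2) :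
    ∃ e f g : Fin 2 → ℂ, e ≠ 0 ∧ f ≠ 0 ∧ g ≠ 0 ∧
      ρ.mulVec (prodVec e f g) = 0 := by
  -- the row space of ρ
  set R := LinearMap.range (Matrix.mulVecLin ρᵀ) with hR
  have hfin : Module.finrank ℂ R = 2 := by
    have := Matrix.rank_transpose ρ
    rw [hrank] at this
    simpa [Matrix.rank, hR] using this
  let b := Module.finBasisOfFinrankEq ℂ R hfin
  set v : (Fin 2 × Fin 2 × Fin 2) → ℂ := (↑(b 0) : (Fin 2 × Fin 2 × Fin 2) → ℂ) with hv
  set w : (Fin 2 × Fin 2 × Fin 2) → ℂ := (↑(b 1) : (Fin 2 × Fin 2 × Fin 2) → ℂ) with hw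
  obtain ⟨e, f, he, hf, h1, h2⟩ := twoForms (Matrix.of (fun a a' => v (a, a', 0)))
    (Matrix.of (fun a a' => w (a, a', 0)))
  set g : Fin 2 → ℂ := ![1, 0] with hg
  set z := prodVec e f g with hz
  have hvz : v ⬝ᵥ z = 0 := by
    rw [← h1]
    simp [hz, dotProduct, prodVec, Matrix.mulVec, Fintype.sum_prod_type,
      Fin.sum_univ_two, hg]
    ring
  have hwz : w ⬝ᵥ z = 0 := by
    rw [← h2]
    simp [hz, dotProduct, prodVec, Matrix.mulVec, Fintype.sum_prod_type,
      Fin.sum_univ_two, hg]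
    ring
  refine ⟨e, f, g, he, hf, by simp [hg], ?_⟩
  funext i
  have hmem : ρ i ∈ R := by
    refine ⟨Pi.single i 1, ?_⟩
    ext j
    simp [Matrix.mulVecLin, Matrix.mulVec, dotProduct, Pi.single_apply]
  have hrepr := b.sum_repr ⟨ρ i, hmem⟩
  have hrow : ρ i = b.repr ⟨ρ i, hmem⟩ 0 • v + b.repr ⟨ρ i, hmem⟩ 1 • w := by
    have h' : ((⟨ρ i, hmem⟩ : R) : (Fin 2 × Fin 2 × Fin 2) → ℂ)
        = ((∑ j : Fin 2, b.repr ⟨ρ i, hmem⟩ j • b j : R) : (Fin 2 × Fin 2 × Fin 2) → ℂ) :=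
      congrArg Subtype.val hrepr.symm
    rw [Fin.sum_univ_two] at h'
    simpa [Fin.sum_univ_two, hv, hw] using h'
  show ρ i ⬝ᵥ z = 0
  rw [hrow]
  simp [add_dotProduct, smul_dotProduct, hvz, hwz]


end
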